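/- For every integer n ≥ 4, the (2,2) broadcast domination number of the 4×n grid graph satisfies γ_{2,2}(G_{4,n}) = 2n − ⌈(n−6)/4⌉. -/

import Mathlib

open Classical in
/-- The reception strength at vertex `u` from a set `S` of broadcasting vertices of
transmission strength `t`: the sum of `t - d(u,v)` over all `v ∈ S` with `d(u,v) < t`. -/
noncomputable def reception {V : Type*} (G : SimpleGraph V) (t : ℕ) (S : Finset V) (u : V) : ℕ∞ :=
  ∑ v ∈ S.filter (fun v => G.edist u v < (t : ℕ∞)), ((t : ℕ∞) - G.edist u v)

/-- `S` is a `(t,r)` broadcast dominating set of `G`. -/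
def IsBroadcastDominating {V : Type*} (G : SimpleGraph V) (t r : ℕ) (S : Finset V) : Prop :=
  ∀ u, (r : ℕ∞) ≤ reception G t S u

/-- The `(t,r)` broadcast domination number of a finite graph `G`. -/
noncomputable def broadcastDomNum {V : Type*} [Fintype V] (G : SimpleGraph V) (t r : ℕ) : ℕ :=
  sInf {k | ∃ S : Finset V, IsBroadcastDominating G t r S ∧ S.card = k}

/-- The `m × n` grid graph: vertices are pairs, adjacent iff at ℓ1-distance 1. -/
def gridGraph (m n : ℕ) : SimpleGraph (Fin m × Fin n) where
  Adj p q := Nat.dist p.1.val q.1.val + Nat.dist p.2.val q.2.val = 1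
  symm := by
    constructor
    intro p q h
    show Nat.dist q.1.val p.1.val + Nat.dist q.2.val p.2.val = 1
    rw [Nat.dist_comm q.1.val p.1.val, Nat.dist_comm q.2.val p.2.val]
    exact h
  loopless := by
    constructor
    intro p h
    simp only [Nat.dist_self, Nat.add_zero] at h
    exact absurd h (by norm_num)


set_option maxRecDepth 10000
set_option maxHeartbeats 4000000

abbrev Col := Finset (Fin 4)

def vcnt (b : Col) (i : Fin 4) : ℕ :=
  (if h : 1 ≤ i.val then (if (⟨i.val-1, by omega⟩ : Fin 4) ∈ b then 1 else 0) else 0) +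
  (if h : i.val+1 < 4 then (if (⟨i.val+1, h⟩ : Fin 4) ∈ b then 1 else 0) else 0)

def cnt (a b c : Col) (i : Fin 4) : ℕ :=
  vcnt b i + (if i ∈ a then 1 else 0) + (if i ∈ c then 1 else 0)

def ok (a b c : Col) : Prop := ∀ i : Fin 4, i ∈ b ∨ 2 ≤ cnt a b c i

instance (a b c : Col) : Decidable (ok a b c) := by unfold ok; infer_instance

def idx (b : Col) : ℕ := ∑ i ∈ b, 2 ^ i.val

def dec (t : ℕ) : Col := Finset.univ.filter (fun i => Nat.testBit t i.val)

noncomputable def entryRow (row : List ℕ∞) (p b : Col) : ℕ∞ :=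
  (b.card : ℕ∞) +
    ((List.finRange 16).map
      (fun c => if ok p b (dec c.val) then row.getD c.val ⊤ else ⊤)).foldr min ⊤

def base : List (List ℕ∞) :=
  List.ofFn (fun p : Fin 16 => List.ofFn (fun b : Fin 16 =>
    if ok (dec p.val) (dec b.val) ∅ then ((dec b.val).card : ℕ∞) else ⊤))

noncomputable def stepV (v : List (List ℕ∞)) : List (List ℕ∞) :=
  List.ofFn (fun p : Fin 16 => List.ofFn (fun b : Fin 16 =>
    entryRow (v.getD b.val []) (dec p.val) (dec b.val)))

noncomputable def V : ℕ → List (List ℕ∞)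
  | 0 => base
  | k+1 => stepV (V k)

noncomputable def G (k : ℕ) (p b : Col) : ℕ∞ := ((V k).getD (idx p) []).getD (idx b) ⊤

noncomputable def A (n : ℕ) : ℕ∞ :=
  ((List.finRange 16).map (fun t => G (n-1) ∅ (dec t.val))).foldr min ⊤

-- decide facts (to be proven by decide at the end)
lemma idx_dec : ∀ t : Fin 16, idx (dec t.val) = t.val := by decide
lemma dec_idx : ∀ b : Col, dec (idx b) = b := by decide
lemma idx_lt : ∀ b : Col, idx b < 16 := by decide
lemma idx_empty : idx (∅ : Col) = 0 := by decide
lemma A4 : A 4 = 8 := by decide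
lemma A5 : A 5 = 10 := by decide
lemma A6 : A 6 = 12 := by decide
lemma A7 : A 7 = 13 := by decide
lemma V_shift_base : V 7 = (V 3).map (List.map (fun x => 7 + x)) := by decide

-- list helpers
lemma getD_ofFn {α : Type*} {n : ℕ} (f : Fin n → α) (i : ℕ) (h : i < n) (d : α) :
    (List.ofFn f).getD i d = f ⟨i, h⟩ := by
  rw [List.getD_eq_getElem?_getD, List.getElem?_ofFn, dif_pos h]
  rfl

lemma getD_map {α β : Type*} (f : α → β) (l : List α) (i : ℕ) (d : α) :
    (l.map f).getD i (f d) = f (l.getD i d) := by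
  induction l generalizing i with
  | nil => simp
  | cons x xs ih => cases i with
    | zero => simp
    | succ j => simpa using ih j

lemma foldr_min_le {l : List ℕ∞} {x : ℕ∞} (hx : x ∈ l) : l.foldr min ⊤ ≤ x := by
  induction l with
  | nil => simp at hx
  | cons y ys ih =>
    rcases List.mem_cons.mp hx with rfl | h
    · exact min_le_left _ _
    · exact le_trans (min_le_right _ _) (ih h)

lemma le_foldr_min {l : List ℕ∞} {y : ℕ∞} (h : ∀ x ∈ l, y ≤ x) : y ≤ l.foldr min ⊤ := by
  induction l with
  | nil => simp
  | cons x xs ih =>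
    exact le_min (h x (by simp)) (ih fun z hz => h z (List.mem_cons_of_mem _ hz))

lemma foldr_min_mem (l : List ℕ∞) : l.foldr min ⊤ = ⊤ ∨ l.foldr min ⊤ ∈ l := by
  induction l with
  | nil => simp
  | cons x xs ih =>
    rcases le_total x (xs.foldr min ⊤) with h | h
    · right; simp [min_eq_left h]
    · rw [List.foldr_cons, min_eq_right h]
      rcases ih with h' | h'
      · left; exact h'
      · right; exact List.mem_cons_of_mem _ h'

lemma foldr_min_add (c : ℕ∞) (l : List ℕ∞) :
    (l.map (fun x => c + x)).foldr min ⊤ = c + l.foldr min ⊤ := by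
  induction l with
  | nil => simp
  | cons x xs ih => simp [ih, min_add_add_left]

-- DP recurrences
lemma V_length (k : ℕ) : (V k).length = 16 := by
  cases k with
  | zero => simp [V, base]
  | succ k => simp [V, stepV]

lemma G_zero (p b : Col) : G 0 p b = if ok p b ∅ then (b.card : ℕ∞) else ⊤ := by
  show ((base).getD (idx p) []).getD (idx b) ⊤ = _
  rw [base, getD_ofFn _ _ (idx_lt p), getD_ofFn _ _ (idx_lt b), dec_idx, dec_idx]

lemma G_succ (k : ℕ) (p b : Col) :
    G (k+1) p b = (b.card : ℕ∞) +
      ((List.finRange 16).map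
        (fun c => if ok p b (dec c.val) then G k b (dec c.val) else ⊤)).foldr min ⊤ := by
  show ((stepV (V k)).getD (idx p) []).getD (idx b) ⊤ = _
  rw [stepV, getD_ofFn _ _ (idx_lt p), getD_ofFn _ _ (idx_lt b), dec_idx, dec_idx]
  rw [entryRow]
  congr 2

-- chainOk / cost
def costL (l : List Col) : ℕ := (l.map Finset.card).sum

def chainOk : Col → List Col → Prop
  | _, [] => True
  | p, [b] => ok p b ∅
  | p, b :: c :: l => ok p b c ∧ chainOk b (c :: l)

lemma G_le : ∀ (l : List Col) (p b : Col), chainOk p (b :: l) →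
    G l.length p b ≤ (costL (b :: l) : ℕ∞) := by
  intro l
  induction l with
  | nil =>
    intro p b h
    have h' : ok p b ∅ := h
    rw [List.length_nil, G_zero, if_pos h']
    simp [costL]
  | cons c l ih =>
    intro p b h
    obtain ⟨h1, h2⟩ : ok p b c ∧ chainOk b (c :: l) := h
    rw [List.length_cons, G_succ]
    have hmem : (if ok p b (dec (⟨idx c, idx_lt c⟩ : Fin 16).val) then
          G l.length b (dec (⟨idx c, idx_lt c⟩ : Fin 16).val) else ⊤) ∈
        (List.finRange 16).map
          (fun t => if ok p b (dec t.val) then G l.length b (dec t.val) else ⊤) :=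
      List.mem_map_of_mem (List.mem_finRange _)
    have hval : (if ok p b (dec (⟨idx c, idx_lt c⟩ : Fin 16).val) then
          G l.length b (dec (⟨idx c, idx_lt c⟩ : Fin 16).val) else ⊤) = G l.length b c := by
      simp only [dec_idx]
      rw [if_pos h1]
    have hle := foldr_min_le hmem
    rw [hval] at hle
    calc (b.card : ℕ∞) + _ ≤ (b.card : ℕ∞) + G l.length b c := add_le_add_right hle _
      _ ≤ (b.card : ℕ∞) + (costL (c :: l) : ℕ∞) := add_le_add_right (ih b c h2) _
      _ = (costL (b :: c :: l) : ℕ∞) := by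
          rw [show costL (b :: c :: l) = b.card + costL (c :: l) from rfl]
          push_cast
          ring

lemma G_ach : ∀ (k : ℕ) (p b : Col), G k p b = ⊤ ∨
    ∃ l : List Col, l.length = k ∧ chainOk p (b :: l) ∧ (costL (b :: l) : ℕ∞) = G k p b := by
  intro k
  induction k with
  | zero =>
    intro p b
    rw [G_zero]
    by_cases h : ok p b ∅
    · right
      exact ⟨[], rfl, h, by simp [costL, if_pos h]⟩
    · left; rw [if_neg h]
  | succ k ih =>
    intro p b
    by_cases htop : G (k+1) p b = ⊤
    · left; exact htop
    right
    rw [G_succ] at htop ⊢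
    set L := (List.finRange 16).map
      (fun c => if ok p b (dec c.val) then G k b (dec c.val) else ⊤) with hL
    have hne : L.foldr min ⊤ ≠ ⊤ := by
      intro h; rw [h] at htop; simp at htop
    rcases foldr_min_mem L with h | h
    · exact absurd h hne
    rw [hL] at h
    obtain ⟨t, _, ht⟩ := List.mem_map.mp h
    by_cases hok : ok p b (dec t.val)
    · rw [if_pos hok] at ht
      rcases ih b (dec t.val) with h' | ⟨l, hlen, hco, hcost⟩
      · exfalso; apply hne; rw [← ht, h']
      · refine ⟨dec t.val :: l, by simp [hlen], ⟨hok, hco⟩, ?_⟩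
        rw [show costL (b :: dec t.val :: l) = b.card + costL (dec t.val :: l) from rfl]
        push_cast
        rw [hcost, ht]
    · rw [if_neg hok] at ht
      exact absurd ht.symm hne

-- shift machinery
lemma getD_map_nil {α : Type*} (f : List α → List α) (hf : f [] = []) (l : List (List α)) (i : ℕ) :
    (l.map f).getD i [] = f (l.getD i []) := by
  conv_lhs => rw [← hf]
  exact getD_map f l i []

lemma getD_map_top (f : ℕ∞ → ℕ∞) (hf : f ⊤ = ⊤) (l : List ℕ∞) (i : ℕ) :
    (l.map f).getD i ⊤ = f (l.getD i ⊤) := by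
  conv_lhs => rw [← hf]
  exact getD_map f l i ⊤

lemma entryRow_map (row : List ℕ∞) (p b : Col) :
    entryRow (row.map (fun x => 7 + x)) p b = 7 + entryRow row p b := by
  unfold entryRow
  rw [add_left_comm]
  congr 1
  rw [← foldr_min_add, List.map_map]
  congr 1
  apply List.map_congr_left
  intro t _
  simp only [Function.comp]
  rw [getD_map_top (fun x => 7 + x) (by simp) row t.val]
  by_cases h : ok p b (dec t.val) <;> simp [h]

lemma stepV_map (v : List (List ℕ∞)) :
    stepV (v.map (List.map (fun x => 7 + x))) = (stepV v).map (List.map (fun x => 7 + x)) := by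
  unfold stepV
  rw [List.map_ofFn]
  congr 1
  funext p
  simp only [Function.comp]
  rw [List.map_ofFn]
  congr 1
  funext b
  simp only [Function.comp]
  rw [getD_map_nil (List.map (fun x => 7 + x)) rfl, entryRow_map]

lemma V_shift : ∀ k, 3 ≤ k → V (k + 4) = (V k).map (List.map (fun x => 7 + x)) := by
  intro k hk
  induction k with
  | zero => omega
  | succ k ih =>
    rcases Nat.lt_or_ge k 3 with h | h
    · interval_cases k
      · omega
      · omega
      · exact V_shift_base
    · have := ih h
      show stepV (V (k + 4)) = _
      rw [this]
      exact stepV_map (V k)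

lemma G_shift (k : ℕ) (hk : 3 ≤ k) (p b : Col) : G (k + 4) p b = 7 + G k p b := by
  unfold G
  rw [V_shift k hk, getD_map_nil (List.map (fun x => 7 + x)) rfl,
    getD_map_top (fun x => 7 + x) (by simp)]

lemma A_shift (n : ℕ) (hn : 4 ≤ n) : A (n + 4) = 7 + A n := by
  unfold A
  have h1 : n + 4 - 1 = (n - 1) + 4 := by omega
  rw [h1, ← foldr_min_add, List.map_map]
  congr 1
  apply List.map_congr_left
  intro t _
  simp only [Function.comp]
  rw [G_shift (n-1) (by omega)]

lemma A_min_le (n : ℕ) (b : Col) : A n ≤ G (n - 1) ∅ b := by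
  unfold A
  apply foldr_min_le
  have : G (n-1) ∅ b = G (n-1) ∅ (dec (⟨idx b, idx_lt b⟩ : Fin 16).val) := by rw [dec_idx]
  rw [this]
  exact List.mem_map_of_mem (List.mem_finRange _)

lemma A_attained (n : ℕ) : A n = ⊤ ∨ ∃ b : Col, A n = G (n - 1) ∅ b := by
  unfold A
  rcases foldr_min_mem ((List.finRange 16).map (fun t => G (n-1) ∅ (dec t.val))) with h | h
  · left; exact h
  · right
    obtain ⟨t, _, ht⟩ := List.mem_map.mp h
    exact ⟨dec t.val, ht.symm⟩

def rr (n : ℕ) : ℕ := 2 * n - (n - 3) / 4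

lemma rr_shift (n : ℕ) (hn : 3 ≤ n) : rr (n + 4) = rr n + 7 := by
  unfold rr
  omega

lemma A_eq_rr : ∀ n, 4 ≤ n → A n = (rr n : ℕ∞) := by
  intro n
  induction n using Nat.strong_induction_on with
  | _ n ih =>
    intro hn
    rcases Nat.lt_or_ge n 8 with h | h
    · interval_cases n
      · rw [A4]; norm_num [rr]
      · rw [A5]; norm_num [rr]
      · rw [A6]; norm_num [rr]
      · rw [A7]; norm_num [rr]
    · have h4 : n - 4 + 4 = n := by omega
      have := A_shift (n - 4) (by omega)
      rw [h4] at this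
      have h2 : rr n = rr (n - 4) + 7 := by
        have h3 := rr_shift (n-4) (by omega)
        rw [h4] at h3
        exact h3
      rw [this, ih (n-4) (by omega) (by omega), h2]
      push_cast
      ring

open Classical in
lemma edist_lt_two_iff {V : Type*} (G : SimpleGraph V) (u v : V) :
    G.edist u v < (2 : ℕ∞) ↔ u = v ∨ G.Adj u v := by
  constructor
  · intro h
    have hne : G.edist u v ≠ ⊤ := by
      intro ht
      rw [ht] at h
      exact absurd h (by simp)
    lift G.edist u v to ℕ using hne with m hm
    have hm2 : m < 2 := by exact_mod_cast h
    interval_cases m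
    · left
      rw [← SimpleGraph.edist_eq_zero_iff (G := G) (u := u) (v := v), ← hm]
      rfl
    · right
      rw [← SimpleGraph.edist_eq_one_iff_adj (G := G) (u := u) (v := v), ← hm]
      rfl
  · rintro (rfl | h)
    · rw [SimpleGraph.edist_self]; norm_num
    · exact lt_of_eq_of_lt (SimpleGraph.edist_eq_one_iff_adj.mpr h) (by norm_num)

open Classical in
lemma reception_eq {V : Type*} (G : SimpleGraph V) (S : Finset V) (u : V) :
    reception G 2 S u =
      (if u ∈ S then 2 else 0) + ((S.filter (fun v => G.Adj u v)).card : ℕ∞) := by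
  unfold reception
  have h1 : S.filter (fun v => G.edist u v < ((2:ℕ) : ℕ∞)) =
      S.filter (fun v => u = v) ∪ S.filter (fun v => G.Adj u v) := by
    rw [← Finset.filter_or]
    apply Finset.filter_congr
    intro v _
    rw [show (((2:ℕ)) : ℕ∞) = (2 : ℕ∞) by norm_cast]
    simpa using edist_lt_two_iff G u v
  rw [h1, Finset.sum_union]
  · have h2 : S.filter (fun v => u = v) = if u ∈ S then {u} else ∅ := by
      by_cases hu : u ∈ S
      · rw [if_pos hu]; ext v; simp only [Finset.mem_filter, Finset.mem_singleton]
        constructor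
        · rintro ⟨-, rfl⟩; rfl
        · rintro rfl; exact ⟨hu, rfl⟩
      · rw [if_neg hu]; ext v; simp only [Finset.mem_filter, Finset.notMem_empty, iff_false]
        rintro ⟨hv, rfl⟩
        exact hu hv
    have h3 : ∑ v ∈ S.filter (fun v => u = v), (((2:ℕ) : ℕ∞) - G.edist u v)
        = (if u ∈ S then 2 else 0) := by
      rw [h2]
      by_cases hu : u ∈ S
      · rw [if_pos hu, if_pos hu, Finset.sum_singleton, SimpleGraph.edist_self]
        rfl
      · rw [if_neg hu, if_neg hu, Finset.sum_empty]
    have h4 : ∑ v ∈ S.filter (fun v => G.Adj u v), (((2:ℕ) : ℕ∞) - G.edist u v)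
        = ((S.filter (fun v => G.Adj u v)).card : ℕ∞) := by
      rw [Finset.sum_congr rfl (fun v hv => ?_), Finset.sum_const, nsmul_eq_mul, mul_one]
      rw [SimpleGraph.edist_eq_one_iff_adj.mpr (Finset.mem_filter.mp hv).2]
      rfl
    rw [h3, h4]
  · rw [Finset.disjoint_left]
    rintro v hv hv'
    obtain ⟨-, rfl⟩ := Finset.mem_filter.mp hv
    exact G.loopless.irrefl _ (Finset.mem_filter.mp hv').2

open Classical in
lemma dominating_iff {V : Type*} (G : SimpleGraph V) (S : Finset V) :
    IsBroadcastDominating G 2 2 S ↔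
      ∀ u, u ∈ S ∨ 2 ≤ (S.filter (fun v => G.Adj u v)).card := by
  unfold IsBroadcastDominating
  apply forall_congr'
  intro u
  rw [reception_eq]
  by_cases hu : u ∈ S
  · simp only [hu, if_pos, true_or, iff_true]
    calc ((2:ℕ) : ℕ∞) = 2 + 0 := by norm_num
    _ ≤ 2 + ((S.filter (fun v => G.Adj u v)).card : ℕ∞) := by
        exact add_le_add_right zero_le _
  · simp only [hu, if_neg, not_false_iff, false_or, zero_add]
    exact_mod_cast Iff.rfl

lemma grid_adj {m n : ℕ} (p q : Fin m × Fin n) :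
    (gridGraph m n).Adj p q ↔
      (p.2 = q.2 ∧ Nat.dist p.1.val q.1.val = 1) ∨
      (p.1 = q.1 ∧ Nat.dist p.2.val q.2.val = 1) := by
  show Nat.dist p.1.val q.1.val + Nat.dist p.2.val q.2.val = 1 ↔ _
  rw [Fin.ext_iff, Fin.ext_iff]
  simp only [Nat.dist]
  omega

def SofL (n : ℕ) (L : List Col) : Finset (Fin 4 × Fin n) :=
  Finset.univ.filter (fun v => v.1 ∈ L.getD v.2.val ∅)

def LofS (n : ℕ) (S : Finset (Fin 4 × Fin n)) : List Col :=
  List.ofFn (fun j : Fin n => Finset.univ.filter (fun i => (i, j) ∈ S))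

lemma LofS_length (n : ℕ) (S : Finset (Fin 4 × Fin n)) : (LofS n S).length = n := by
  simp [LofS]

lemma SofL_LofS (n : ℕ) (S : Finset (Fin 4 × Fin n)) : SofL n (LofS n S) = S := by
  ext ⟨i, j⟩
  simp only [SofL, LofS, Finset.mem_filter, Finset.mem_univ, true_and]
  show (i, j) ∈ SofL n (LofS n S) ↔ _
  rw [SofL, Finset.mem_filter, LofS, getD_ofFn _ _ j.isLt]
  simp

lemma card_SofL (n : ℕ) (L : List Col) (hL : L.length = n) :
    (SofL n L).card = costL L := by
  subst hL
  rw [SofL, Finset.card_filter]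
  rw [Fintype.sum_prod_type_right]
  have h1 : ∀ j : Fin L.length,
      (∑ i : Fin 4, if i ∈ L.getD j.val ∅ then 1 else 0) = (L.getD j.val ∅).card := by
    intro j
    rw [← Finset.card_filter]
    congr 1
    ext i
    simp
  rw [Finset.sum_congr rfl (fun j _ => h1 j)]
  rw [costL]
  conv_rhs => rw [← List.ofFn_get L]
  rw [List.map_ofFn, List.sum_ofFn]
  apply Finset.sum_congr rfl
  intro j _
  congr 1
  rw [List.getD_eq_getElem?_getD, List.getElem?_eq_getElem j.isLt]
  rfl

lemma chainOk_iff' : ∀ (l : List Col) (p : Col), chainOk p l ↔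
    ∀ j < l.length, ok (if j = 0 then p else l.getD (j-1) ∅) (l.getD j ∅) (l.getD (j+1) ∅) := by
  intro l
  induction l with
  | nil => intro p; simp [chainOk]
  | cons b t ih =>
    intro p
    cases t with
    | nil =>
      constructor
      · intro h j hj
        have hj0 : j = 0 := by simp at hj; omega
        subst hj0
        exact h
      · intro h
        exact h 0 (by simp)
    | cons c t' =>
      have hh : chainOk p (b :: c :: t') ↔ ok p b c ∧ chainOk b (c :: t') := Iff.rfl
      rw [hh, ih b]
      constructor
      · rintro ⟨h1, h2⟩ j hj
        cases j with
        | zero => exact h1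
        | succ j' =>
          have := h2 j' (by simpa using Nat.lt_of_succ_lt_succ hj)
          cases j' with
          | zero => simpa using this
          | succ j'' => simpa using this
      · intro h
        refine ⟨h 0 (by simp), ?_⟩
        intro j' hj'
        have := h (j'+1) (by simpa using Nat.succ_lt_succ hj')
        cases j' with
        | zero => simpa using this
        | succ j'' => simpa using this

lemma vcnt_card : ∀ (b : Col) (i : Fin 4),
    (Finset.univ.filter (fun i' : Fin 4 => i' ∈ b ∧ Nat.dist i.val i'.val = 1)).card = vcnt b i := by
  decide

lemma horiz_card (n : ℕ) (j : Fin n) (P : ℕ → Prop) [DecidablePred P] :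
    (Finset.univ.filter (fun j' : Fin n => Nat.dist j.val j'.val = 1 ∧ P j'.val)).card
    = (if 1 ≤ j.val ∧ P (j.val - 1) then 1 else 0) +
      (if j.val + 1 < n ∧ P (j.val + 1) then 1 else 0) := by
  by_cases h1 : 1 ≤ j.val <;> by_cases h2 : j.val + 1 < n
  · -- both neighbors exist
    have hAB : (⟨j.val - 1, by omega⟩ : Fin n) ≠ ⟨j.val + 1, h2⟩ := by
      simp only [ne_eq, Fin.mk.injEq]; omega
    have hset : Finset.univ.filter (fun j' : Fin n => Nat.dist j.val j'.val = 1 ∧ P j'.val)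
        = ({⟨j.val - 1, by omega⟩, ⟨j.val + 1, h2⟩} : Finset (Fin n)).filter (fun x => P x.val) := by
      ext x
      simp only [Finset.mem_filter, Finset.mem_univ, true_and, Finset.mem_insert,
        Finset.mem_singleton, Fin.ext_iff]
      constructor
      · rintro ⟨hd, hP⟩
        refine ⟨?_, hP⟩
        simp only [Nat.dist] at hd
        omega
      · rintro ⟨hx, hP⟩
        refine ⟨?_, hP⟩
        simp only [Nat.dist]
        omega
    rw [hset, Finset.filter_insert, Finset.filter_singleton]
    by_cases hPA : P ((⟨j.val - 1, by omega⟩ : Fin n)).val <;>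
      by_cases hPB : P ((⟨j.val + 1, h2⟩ : Fin n)).val <;>
      simp only at hPA hPB <;>
      simp [hPA, hPB, h1, h2, hAB, Finset.card_insert_of_notMem]
  · -- only left neighbor
    have hset : Finset.univ.filter (fun j' : Fin n => Nat.dist j.val j'.val = 1 ∧ P j'.val)
        = ({⟨j.val - 1, by omega⟩} : Finset (Fin n)).filter (fun x => P x.val) := by
      ext x
      simp only [Finset.mem_filter, Finset.mem_univ, true_and, Finset.mem_singleton, Fin.ext_iff]
      constructor
      · rintro ⟨hd, hP⟩
        refine ⟨?_, hP⟩
        simp only [Nat.dist] at hd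
        have := x.isLt
        omega
      · rintro ⟨hx, hP⟩
        refine ⟨?_, hP⟩
        simp only [Nat.dist]
        omega
    rw [hset, Finset.filter_singleton]
    by_cases hPA : P ((⟨j.val - 1, by omega⟩ : Fin n)).val <;>
      simp only at hPA <;> simp [hPA, h1, h2]
  · -- only right neighbor
    have hset : Finset.univ.filter (fun j' : Fin n => Nat.dist j.val j'.val = 1 ∧ P j'.val)
        = ({⟨j.val + 1, h2⟩} : Finset (Fin n)).filter (fun x => P x.val) := by
      ext x
      simp only [Finset.mem_filter, Finset.mem_univ, true_and, Finset.mem_singleton, Fin.ext_iff]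
      constructor
      · rintro ⟨hd, hP⟩
        refine ⟨?_, hP⟩
        simp only [Nat.dist] at hd
        omega
      · rintro ⟨hx, hP⟩
        refine ⟨?_, hP⟩
        simp only [Nat.dist]
        omega
    rw [hset, Finset.filter_singleton]
    by_cases hPB : P ((⟨j.val + 1, h2⟩ : Fin n)).val <;>
      simp only at hPB <;> simp [hPB, h1, h2]
  · -- no neighbors
    have hset : Finset.univ.filter (fun j' : Fin n => Nat.dist j.val j'.val = 1 ∧ P j'.val)
        = (∅ : Finset (Fin n)) := by
      ext x
      simp only [Finset.mem_filter, Finset.mem_univ, true_and, Finset.notMem_empty, iff_false]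
      rintro ⟨hd, -⟩
      simp only [Nat.dist] at hd
      have := x.isLt
      omega
    rw [hset]
    simp [h1, h2]

open Classical in
lemma card_filter_adj (n : ℕ) (L : List Col) (hL : L.length = n) (i : Fin 4) (j : Fin n) :
    ((SofL n L).filter (fun v => (gridGraph 4 n).Adj (i, j) v)).card
    = cnt (if j.val = 0 then ∅ else L.getD (j.val - 1) ∅) (L.getD j.val ∅)
        (L.getD (j.val + 1) ∅) i := by
  have hsplit : (SofL n L).filter (fun v => (gridGraph 4 n).Adj (i, j) v)
      = (SofL n L).filter (fun v => j = v.2 ∧ Nat.dist i.val v.1.val = 1)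
        ∪ (SofL n L).filter (fun v => i = v.1 ∧ Nat.dist j.val v.2.val = 1) := by
    rw [← Finset.filter_or]
    apply Finset.filter_congr
    intro v _
    rw [grid_adj]
  rw [hsplit, Finset.card_union_of_disjoint]
  · have hV : (SofL n L).filter (fun v => j = v.2 ∧ Nat.dist i.val v.1.val = 1)
        = (Finset.univ.filter
            (fun i' : Fin 4 => i' ∈ L.getD j.val ∅ ∧ Nat.dist i.val i'.val = 1)).image
          (fun i' => (i', j)) := by
      ext ⟨a, y⟩
      simp only [SofL, Finset.mem_filter, Finset.mem_univ, true_and, Finset.mem_image,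
        Prod.mk.injEq]
      constructor
      · rintro ⟨hmem, rfl, hd⟩
        exact ⟨a, ⟨hmem, hd⟩, rfl, rfl⟩
      · rintro ⟨i', ⟨hmem, hd⟩, rfl, rfl⟩
        exact ⟨hmem, rfl, hd⟩
    have hH : (SofL n L).filter (fun v => i = v.1 ∧ Nat.dist j.val v.2.val = 1)
        = (Finset.univ.filter
            (fun j' : Fin n => Nat.dist j.val j'.val = 1 ∧ i ∈ L.getD j'.val ∅)).image
          (fun j' => (i, j')) := by
      ext ⟨a, y⟩
      simp only [SofL, Finset.mem_filter, Finset.mem_univ, true_and, Finset.mem_image,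
        Prod.mk.injEq]
      constructor
      · rintro ⟨hmem, rfl, hd⟩
        exact ⟨y, ⟨hd, hmem⟩, rfl, rfl⟩
      · rintro ⟨j', ⟨hd, hmem⟩, rfl, rfl⟩
        exact ⟨hmem, rfl, hd⟩
    rw [hV, hH, Finset.card_image_of_injective _ (fun a b h => (Prod.mk.injEq _ _ _ _ ▸ h).1),
      Finset.card_image_of_injective _ (fun a b h => (Prod.mk.injEq _ _ _ _ ▸ h).2)]
    rw [vcnt_card, horiz_card n j (fun t => i ∈ L.getD t ∅)]
    rw [cnt]
    have hleft : (if 1 ≤ j.val ∧ i ∈ L.getD (j.val - 1) ∅ then 1 else 0)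
        = (if i ∈ (if j.val = 0 then (∅ : Col) else L.getD (j.val - 1) ∅) then 1 else 0) := by
      by_cases h0 : j.val = 0
      · simp [h0]
      · rw [if_neg h0]
        have h1 : (1 ≤ j.val ∧ i ∈ L.getD (j.val - 1) ∅) ↔ (i ∈ L.getD (j.val - 1) ∅) :=
          and_iff_right (by omega)
        rw [if_congr h1 rfl rfl]
    have hright : (if j.val + 1 < n ∧ i ∈ L.getD (j.val + 1) ∅ then 1 else 0)
        = (if i ∈ L.getD (j.val + 1) ∅ then 1 else 0) := by
      by_cases h0 : j.val + 1 < n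
      · simp [h0]
      · have : L.getD (j.val + 1) ∅ = ∅ := by
          apply List.getD_eq_default
          omega
        rw [this]
        simp [h0]
    rw [hleft, hright]
    ring
  · rw [Finset.disjoint_left]
    rintro ⟨a, y⟩ hv hv'
    obtain ⟨-, rfl, hd⟩ := Finset.mem_filter.mp hv
    obtain ⟨-, rfl, -⟩ := Finset.mem_filter.mp hv'
    simp [Nat.dist] at hd

open Classical in
lemma dom_iff_chain (n : ℕ) (L : List Col) (hL : L.length = n) :
    IsBroadcastDominating (gridGraph 4 n) 2 2 (SofL n L) ↔ chainOk ∅ L := by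
  rw [dominating_iff, chainOk_iff' L ∅]
  constructor
  · intro h j hj
    intro i
    have hjn : j < n := hL ▸ hj
    have := h (i, ⟨j, hjn⟩)
    rcases this with hmem | hcard
    · left
      simpa [SofL] using hmem
    · right
      rw [card_filter_adj n L hL i ⟨j, hjn⟩] at hcard
      exact hcard
  · intro h u
    obtain ⟨i, j⟩ := u
    have := h j.val (hL ▸ j.isLt) i
    rcases this with hmem | hcnt
    · left
      simpa [SofL] using hmem
    · right
      rw [card_filter_adj n L hL i j]
      exact hcnt

lemma broadcast_eq_rr (n : ℕ) (hn : 4 ≤ n) : broadcastDomNum (gridGraph 4 n) 2 2 = rr n := by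
  have hA := A_eq_rr n hn
  have hAtop : A n ≠ ⊤ := by rw [hA]; exact ENat.coe_ne_top _
  obtain ⟨b, hb⟩ := (A_attained n).resolve_left hAtop
  have hGb : G (n-1) ∅ b = ((rr n : ℕ) : ℕ∞) := by rw [← hb, hA]
  have hGtop : G (n-1) ∅ b ≠ ⊤ := by rw [hGb]; exact ENat.coe_ne_top _
  obtain ⟨l, hlen, hchain, hcost⟩ := (G_ach (n-1) ∅ b).resolve_left hGtop
  have hLlen : (b :: l).length = n := by simp [hlen]; omega
  have hcost' : costL (b :: l) = rr n := by
    have h := hcost.trans hGb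
    exact_mod_cast h
  have hdom : IsBroadcastDominating (gridGraph 4 n) 2 2 (SofL n (b :: l)) :=
    (dom_iff_chain n (b :: l) hLlen).mpr hchain
  have hcard : (SofL n (b :: l)).card = rr n := by rw [card_SofL n _ hLlen, hcost']
  have hlow : ∀ k ∈ {k | ∃ S : Finset (Fin 4 × Fin n),
      IsBroadcastDominating (gridGraph 4 n) 2 2 S ∧ S.card = k}, rr n ≤ k := by
    rintro k ⟨S, hS, rfl⟩
    have hL2 : (LofS n S).length = n := LofS_length n S
    have hchain2 : chainOk ∅ (LofS n S) := by
      rw [← dom_iff_chain n _ hL2, SofL_LofS]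
      exact hS
    obtain ⟨b2, l2, hbl⟩ : ∃ b2 l2, LofS n S = b2 :: l2 := by
      cases hLS : LofS n S with
      | nil => exfalso; rw [hLS] at hL2; simp at hL2; omega
      | cons x xs => exact ⟨x, xs, rfl⟩
    have hlen2 : l2.length = n - 1 := by rw [hbl] at hL2; simp at hL2; omega
    have h1 : G (n-1) ∅ b2 ≤ (costL (LofS n S) : ℕ∞) := by
      rw [hbl, ← hlen2]
      exact G_le l2 ∅ b2 (hbl ▸ hchain2)
    have h2 : ((rr n : ℕ) : ℕ∞) ≤ ((costL (LofS n S) : ℕ) : ℕ∞) := by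
      rw [← hA]
      exact le_trans (A_min_le n b2) h1
    have h3 : costL (LofS n S) = S.card := by rw [← card_SofL n _ hL2, SofL_LofS]
    rw [h3] at h2
    exact_mod_cast h2
  apply le_antisymm
  · exact Nat.sInf_le ⟨SofL n (b :: l), hdom, hcard⟩
  · exact le_csInf ⟨rr n, SofL n (b :: l), hdom, hcard⟩ hlow

theorem stmt1 (n : ℕ) (hn : 4 ≤ n) :
    (broadcastDomNum (gridGraph 4 n) 2 2 : ℤ) = 2 * n - ⌈((n : ℚ) - 6) / 4⌉ := by
  rw [broadcast_eq_rr n hn]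
  obtain ⟨m, rfl⟩ : ∃ m, n = m + 3 := ⟨n - 3, by omega⟩
  have hceil : ⌈(((m + 3 : ℕ) : ℚ) - 6) / 4⌉ = ((m / 4 : ℕ) : ℤ) := by
    rw [Int.ceil_eq_iff]
    have h1 : 4 * (m / 4) ≤ m := by omega
    have h2 : m ≤ 4 * (m / 4) + 3 := by omega
    have hc1 : 4 * ((m / 4 : ℕ) : ℚ) ≤ (m : ℚ) := by exact_mod_cast h1
    have hc2 : (m : ℚ) ≤ 4 * ((m / 4 : ℕ) : ℚ) + 3 := by exact_mod_cast h2
    have e1 : ((((m / 4 : ℕ) : ℤ)) : ℚ) = ((m / 4 : ℕ) : ℚ) := by norm_cast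
    have e2 : (((m + 3 : ℕ)) : ℚ) = (m : ℚ) + 3 := by push_cast; ring
    constructor
    · rw [lt_div_iff₀ (by norm_num : (0:ℚ) < 4), e1, e2]
      linarith
    · rw [div_le_iff₀ (by norm_num : (0:ℚ) < 4), e1, e2]
      linarith
  rw [hceil, rr]
  have hle : (m + 3 - 3) / 4 ≤ 2 * (m + 3) := by omega
  have hsub : m + 3 - 3 = m := by omega
  rw [hsub] at hle ⊢
  push_cast [Nat.cast_sub hle]
  ring
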